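/- Let R be an integral domain, T a flat overring of R (with the same quotient field) such that the conductor M := (R : T) is a nonzero maximal ideal of T, and suppose T/M is a field extension of R/M with R/M ≠ T/M. Then T is a t_R-ideal of R, i.e., T = T^{t_R} where t_R is the t-operation of R viewed on the fractional R-module T. -/

import Mathlib

open FractionalIdeal

set_option maxHeartbeats 1000000
set_option synthInstance.maxHeartbeats 400000

open FractionalIdeal

open TensorProduct LinearMap in
theorem flat_key {R K : Type*} [CommRing R] [IsDomain R] [Field K] [Algebra R K]
    [IsFractionRing R K]
    (T : Subalgebra R K) [Module.Flat R ↥T]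
    (TF : FractionalIdeal (nonZeroDivisors R) K)
    (hTF : (TF : Submodule R K) = Subalgebra.toSubmodule T)
    (t : K) (ht : t ∈ T) :
    ∃ J : Ideal R, (∀ r ∈ J, ∃ r', algebraMap R K r' = algebraMap R K r * t) ∧
      (1 : K) ∈ (↑J * TF : FractionalIdeal (nonZeroDivisors R) K) := by
  obtain ⟨⟨a, b⟩, hab⟩ := IsLocalization.surj (nonZeroDivisors R) t
  dsimp only at hab
  set J : Ideal R :=
    Submodule.comap (LinearMap.toSpanSingleton R K t)
      (LinearMap.range (Algebra.linearMap R K)) with hJ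
  have hJmem : ∀ r : R, r ∈ J ↔ ∃ r', algebraMap R K r' = algebraMap R K r * t := by
    intro r
    simp [hJ, Submodule.mem_comap, LinearMap.toSpanSingleton_apply, LinearMap.mem_range,
      Algebra.smul_def]
  refine ⟨J, fun r hr => (hJmem r).mp hr, ?_⟩
  set g : (R × R) →ₗ[R] R := a • LinearMap.fst R R R + (b : R) • LinearMap.snd R R R with hgdef
  have hga : g (1, 0) = a := by simp [hgdef]
  have hgb : g (0, 1) = (b : R) := by simp [hgdef]
  set tT : ↥T := ⟨t, ht⟩ with htT
  set w : (R × R) ⊗[R] ↥T := (1, 0) ⊗ₜ (1 : ↥T) - (0, 1) ⊗ₜ tT with hw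
  have habT : a • (1 : ↥T) = (b : R) • tT := by
    apply Subtype.ext
    simp [Algebra.smul_def, htT, ← hab, mul_comm]
  have hg0 : rTensor ↥T g w = 0 := by
    rw [hw, map_sub, rTensor_tmul, rTensor_tmul, hga, hgb]
    have e1 : (a : R) ⊗ₜ[R] (1 : ↥T) = (1 : R) ⊗ₜ[R] (a • (1 : ↥T)) := by
      rw [← TensorProduct.smul_tmul, smul_eq_mul, mul_one]
    have e2 : ((b : R) : R) ⊗ₜ[R] tT = (1 : R) ⊗ₜ[R] ((b : R) • tT) := by
      rw [← TensorProduct.smul_tmul, smul_eq_mul, mul_one]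
    rw [e1, e2, habT, sub_self]
  set I : Ideal R := LinearMap.range g with hI
  have hinj : Function.Injective (rTensor ↥T I.subtype) :=
    (Module.Flat.iff_rTensor_injective').mp inferInstance I
  have hw0 : rTensor ↥T g.rangeRestrict w = 0 := by
    apply hinj
    rw [_root_.map_zero, ← LinearMap.comp_apply, ← LinearMap.rTensor_comp,
      LinearMap.subtype_comp_codRestrict]
    exact hg0
  have hexact : Function.Exact ((LinearMap.ker g).subtype) g.rangeRestrict := by
    intro y
    constructor
    · intro h
      have hy : g y = 0 := by
        have := congrArg (Subtype.val) h
        simpa using this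
      exact ⟨⟨y, hy⟩, rfl⟩
    · rintro ⟨⟨z, hz⟩, rfl⟩
      exact Subtype.ext (by simpa using hz)
  have hsurj : Function.Surjective g.rangeRestrict := g.surjective_rangeRestrict
  have hTex := rTensor_exact (R := R) ↥T hexact hsurj
  obtain ⟨u, hu⟩ := (hTex w).mp hw0
  obtain ⟨S, hS⟩ := TensorProduct.exists_finset u
  set Φ : (R × R) ⊗[R] ↥T →ₗ[R] ↥T :=
    TensorProduct.lift ((LinearMap.lsmul R ↥T).comp (LinearMap.fst R R R)) with hΦ
  have hΦw : Φ w = 1 := by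
    rw [hw, map_sub]
    simp [hΦ]
  have hsum : (1 : ↥T) = ∑ p ∈ S, ((p.1 : R × R).1) • p.2 := by
    rw [← hΦw, ← hu, hS, map_sum, map_sum]
    refine Finset.sum_congr rfl fun p _ => ?_
    simp [hΦ]
  have hbK : algebraMap R K (b : R) ≠ 0 := by
    rw [Ne, IsFractionRing.to_map_eq_zero_iff]
    exact nonZeroDivisors.coe_ne_zero b
  have hmemJ : ∀ p : (↥(LinearMap.ker g)) × ↥T, p ∈ S → ((p.1 : R × R).1) ∈ J := by
    rintro ⟨⟨⟨c, d⟩, hcd⟩, y⟩ -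
    have h3 : g (c, d) = 0 := hcd
    rw [hgdef] at h3
    simp only [LinearMap.add_apply, LinearMap.smul_apply, LinearMap.fst_apply,
      LinearMap.snd_apply, smul_eq_mul] at h3
    have h2 : a * c = -((b : R) * d) := eq_neg_of_add_eq_zero_left h3
    rw [hJmem]
    refine ⟨-d, ?_⟩
    apply mul_left_cancel₀ hbK
    have h4 : algebraMap R K ((b : R) * -d) =
        algebraMap R K (b : R) * (algebraMap R K c * t) := by
      rw [show (b : R) * -d = a * c by rw [h2]; ring, _root_.map_mul, ← hab]
      ring
    simpa [_root_.map_mul, _root_.map_neg] using h4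
  rw [← FractionalIdeal.mem_coe, FractionalIdeal.coe_mul]
  have h1K : (1 : K) = ∑ p ∈ S, algebraMap R K ((p.1 : R × R).1) * (p.2 : K) := by
    have := congrArg (Subtype.val) hsum
    simpa [Algebra.smul_def] using this
  rw [h1K]
  apply Submodule.sum_mem
  intro p hp
  apply Submodule.mul_mem_mul
  · exact FractionalIdeal.mem_coe.mpr
      ((FractionalIdeal.mem_coeIdeal _).mpr ⟨_, hmemJ p hp, rfl⟩)
  · rw [hTF]
    exact p.2.2

/-- Let `T` be a flat overring of `R` (inside the quotient field `K` of `R`) whose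
conductor `M = (R : T)` is a nonzero maximal ideal of `T`, and such that the residue
extension `R/M → T/M` is proper (some `t ∈ T` is not congruent mod the conductor to any
element of `R`). Then `T` is a `t_R`-ideal of `R`: for every nonzero finitely generated
fractional ideal `F ⊆ T` of `R`, `F^{v_R} = 1/(1/F) ⊆ T`. -/
theorem overring_is_t_ideal
    {R K : Type*} [CommRing R] [IsDomain R] [Field K] [Algebra R K] [IsFractionRing R K]
    (T : Subalgebra R K) [Module.Flat R ↥T]
    (hmax : ∃ Mi : Ideal ↥T, Mi.IsMaximal ∧ Mi ≠ ⊥ ∧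
      (∀ t : ↥T, t ∈ Mi ↔ ∀ u : ↥T, ∃ r : R, algebraMap R K r = (t : K) * (u : K)))
    (hres : ∃ t : ↥T, ∀ r : R,
      ¬ (∀ u : ↥T, ∃ r' : R, algebraMap R K r' = ((t : K) - algebraMap R K r) * (u : K)))
    (TF : FractionalIdeal (nonZeroDivisors R) K)
    (hTF : (TF : Submodule R K) = Subalgebra.toSubmodule T) :
    ∀ F : FractionalIdeal (nonZeroDivisors R) K, F ≠ 0 → (F : Submodule R K).FG →
      F ≤ TF → 1 / (1 / F) ≤ TF := by
  intro F hF0 hFG hFT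
  have memTF : ∀ {x : K}, x ∈ TF ↔ x ∈ T := fun {x} => by
    rw [← FractionalIdeal.mem_coe, hTF]
    exact Iff.rfl
  have h1TF : (1 : K) ∈ TF := memTF.mpr T.one_mem
  have hTFmul : TF * TF ≤ TF := by
    rw [FractionalIdeal.mul_le]
    intro i hi j hj
    exact memTF.mpr (T.mul_mem (memTF.mp hi) (memTF.mp hj))
  obtain ⟨s, hs⟩ := hFG
  have hsT : ∀ f ∈ s, f ∈ T := by
    intro f hf
    have hfF : f ∈ F := by
      rw [← FractionalIdeal.mem_coe, ← hs]
      exact Submodule.subset_span hf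
    exact memTF.mp (hFT hfF)
  choose Jf hJf1 hJf2 using fun p : {x // x ∈ s} => flat_key T TF hTF p.1 (hsT p.1 p.2)
  set J : Ideal R := ∏ p ∈ s.attach, Jf p with hJdef
  have hJle : ∀ p : {x // x ∈ s}, J ≤ Jf p := fun p =>
    le_trans Ideal.prod_le_inf (Finset.inf_le (Finset.mem_attach _ _))
  have hJT : (1 : K) ∈ (↑J * TF : FractionalIdeal (nonZeroDivisors R) K) := by
    rw [hJdef]
    refine Finset.prod_induction Jf
      (fun A => (1 : K) ∈ (↑A * TF : FractionalIdeal (nonZeroDivisors R) K)) ?_ ?_ ?_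
    · intro A B hA hB
      have h1 : ((1 : K) * 1) ∈ (↑A * TF) * (↑B * TF) := FractionalIdeal.mul_mem_mul hA hB
      rw [one_mul] at h1
      have heq : (↑A * TF) * (↑B * TF) =
          (↑(A * B) : FractionalIdeal (nonZeroDivisors R) K) * (TF * TF) := by
        rw [FractionalIdeal.coeIdeal_mul]; ring
      rw [heq] at h1
      have hle : (↑(A * B) : FractionalIdeal (nonZeroDivisors R) K) * (TF * TF) ≤
          ↑(A * B) * TF := by
        rw [FractionalIdeal.mul_le]
        intro i hi j hj
        exact FractionalIdeal.mul_mem_mul hi (hTFmul hj)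
      exact hle h1
    · show (1 : K) ∈ (↑(1 : Ideal R) : FractionalIdeal (nonZeroDivisors R) K) * TF
      rw [Ideal.one_eq_top, FractionalIdeal.coeIdeal_top, one_mul]
      exact h1TF
    · intro p _
      exact hJf2 p
  have hJF : ∀ r ∈ J, ∀ y ∈ F,
      algebraMap R K r * y ∈ (1 : FractionalIdeal (nonZeroDivisors R) K) := by
    intro r hr y hy
    rw [← FractionalIdeal.mem_coe, ← hs] at hy
    induction hy using Submodule.span_induction with
    | mem z hz =>
        obtain ⟨r', hr'⟩ := hJf1 ⟨z, hz⟩ r (hJle ⟨z, hz⟩ hr)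
        exact (FractionalIdeal.mem_one_iff _).mpr ⟨r', hr'⟩
    | zero =>
        rw [mul_zero, ← FractionalIdeal.mem_coe]
        exact Submodule.zero_mem _
    | add z z' _ _ hz hz' =>
        rw [mul_add]
        rw [← FractionalIdeal.mem_coe] at hz hz' ⊢
        exact add_mem hz hz'
    | smul c z _ hz =>
        rw [mul_smul_comm, ← FractionalIdeal.mem_coe]
        exact Submodule.smul_mem _ c (FractionalIdeal.mem_coe.mpr hz)
  by_cases hG : (1 / F : FractionalIdeal (nonZeroDivisors R) K) = 0
  · rw [hG, FractionalIdeal.div_zero]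
    exact zero_le _
  intro x hx
  have hx' : x ∈ (1 : FractionalIdeal (nonZeroDivisors R) K) / (1 / F) := hx
  rw [FractionalIdeal.mem_div_iff_of_ne_zero hG] at hx'
  have hxJ : ∀ r ∈ J, x * algebraMap R K r ∈ (1 : FractionalIdeal (nonZeroDivisors R) K) := by
    intro r hr
    apply hx'
    rw [FractionalIdeal.mem_div_iff_of_ne_zero hF0]
    intro y hy
    exact hJF r hr y hy
  have hfin : x * (1 : K) ∈ TF := by
    have h1 : (1 : K) ∈ ((↑J * TF : FractionalIdeal (nonZeroDivisors R) K) : Submodule R K) :=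
      FractionalIdeal.mem_coe.mpr hJT
    rw [FractionalIdeal.coe_mul] at h1
    refine Submodule.mul_induction_on h1 ?_ ?_
    · intro m hm n hn
      obtain ⟨r, hrJ, rfl⟩ := (FractionalIdeal.mem_coeIdeal _).mp (FractionalIdeal.mem_coe.mp hm)
      obtain ⟨r'', hr''⟩ := (FractionalIdeal.mem_one_iff _).mp (hxJ r hrJ)
      have hn' : n ∈ TF := FractionalIdeal.mem_coe.mp hn
      rw [← mul_assoc, ← hr'', ← Algebra.smul_def, ← FractionalIdeal.mem_coe]
      rw [← FractionalIdeal.mem_coe] at hn'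
      exact Submodule.smul_mem _ _ hn'
    · intro y z hy hz
      rw [← FractionalIdeal.mem_coe] at hy hz ⊢
      rw [mul_add]
      exact add_mem hy hz
  rw [mul_one] at hfin
  exact FractionalIdeal.mem_coe.mpr hfin
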